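/- For all real numbers x, y and all p with 0 < p ≤ 2, |x^2 - y^2|^(p/2) ≤ max(1, 2^((p-1)/2)) * sqrt((|x|^p + |y|^p) * |x - y|^p). -/

import Mathlib

theorem stmt2 (x y p : ℝ) (hp0 : 0 < p) (hp2 : p ≤ 2) :
    |x ^ 2 - y ^ 2| ^ (p / 2) ≤
      max 1 ((2 : ℝ) ^ ((p - 1) / 2)) *
        Real.sqrt ((|x| ^ p + |y| ^ p) * |x - y| ^ p) := by
  set M : ℝ := max 1 ((2 : ℝ) ^ ((p - 1) / 2)) with hM
  have hM0 : (0:ℝ) ≤ M := le_trans zero_le_one (le_max_left _ _)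
  have h2 : (2:ℝ) ^ ((p-1)/2) * (2:ℝ) ^ ((p-1)/2) = (2:ℝ) ^ (p-1) := by
    rw [← Real.rpow_add (by norm_num : (0:ℝ) < 2)]; ring_nf
  have hMsq : M * M = max 1 ((2:ℝ) ^ (p - 1)) := by
    rcases le_total ((2:ℝ) ^ ((p-1)/2)) 1 with h | h
    · rw [hM, max_eq_left h, one_mul, max_eq_left]
      rw [← h2]
      calc (2:ℝ) ^ ((p-1)/2) * (2:ℝ) ^ ((p-1)/2) ≤ 1 * 1 :=
            mul_le_mul h h (Real.rpow_nonneg (by norm_num) _) zero_le_one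
        _ = 1 := by ring
    · rw [hM, max_eq_right h, h2, max_eq_right]
      rw [← h2]
      nlinarith [Real.rpow_nonneg (show (0:ℝ) ≤ 2 by norm_num) ((p-1)/2)]
  have key : ∀ a b : NNReal, (a + b) ^ p ≤ (max 1 ((2:NNReal) ^ (p - 1))) * (a ^ p + b ^ p) := by
    intro a b
    rcases le_total p 1 with h1 | h1
    · calc (a + b) ^ p ≤ a ^ p + b ^ p := NNReal.rpow_add_le_add_rpow a b hp0.le h1
        _ ≤ max 1 ((2:NNReal) ^ (p - 1)) * (a ^ p + b ^ p) := by
            exact le_mul_of_one_le_left zero_le (le_max_left _ _)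
    · calc (a + b) ^ p ≤ (2:NNReal) ^ (p - 1) * (a ^ p + b ^ p) :=
            NNReal.rpow_add_le_mul_rpow_add_rpow a b h1
        _ ≤ max 1 ((2:NNReal) ^ (p - 1)) * (a ^ p + b ^ p) := by
            exact mul_le_mul_of_nonneg_right (le_max_right _ _) zero_le
  have keyR : |x + y| ^ p ≤ max 1 ((2:ℝ) ^ (p - 1)) * (|x| ^ p + |y| ^ p) := by
    have h := key ‖x‖₊ ‖y‖₊
    have h' : (‖x‖₊ + ‖y‖₊ : NNReal) ^ p ≤ (max 1 ((2:NNReal) ^ (p - 1))) * (‖x‖₊ ^ p + ‖y‖₊ ^ p) := h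
    have hcast := NNReal.coe_le_coe.2 h'
    push_cast [NNReal.coe_rpow, NNReal.coe_max] at hcast
    calc |x + y| ^ p ≤ (|x| + |y|) ^ p :=
          Real.rpow_le_rpow (abs_nonneg _) (abs_add_le x y) hp0.le
      _ ≤ _ := by
          simpa [coe_nnnorm, Real.norm_eq_abs] using hcast
  -- rewrite both sides as square roots
  have habs : |x ^ 2 - y ^ 2| = |x + y| * |x - y| := by
    rw [← abs_mul]; ring_nf
  have hLHS : |x ^ 2 - y ^ 2| ^ (p / 2) = Real.sqrt (|x + y| ^ p * |x - y| ^ p) := by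
    rw [Real.sqrt_eq_rpow, ← Real.mul_rpow (abs_nonneg _) (abs_nonneg _),
      ← Real.rpow_mul (mul_nonneg (abs_nonneg _) (abs_nonneg _)), habs]
    rw [mul_one_div]
  have hRHS : M * Real.sqrt ((|x| ^ p + |y| ^ p) * |x - y| ^ p)
      = Real.sqrt (max 1 ((2:ℝ) ^ (p - 1)) * ((|x| ^ p + |y| ^ p) * |x - y| ^ p)) := by
    rw [← hMsq, Real.sqrt_mul (mul_self_nonneg M), Real.sqrt_mul_self hM0]
  rw [hLHS, hRHS]
  apply Real.sqrt_le_sqrt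
  calc |x + y| ^ p * |x - y| ^ p
      ≤ (max 1 ((2:ℝ) ^ (p - 1)) * (|x| ^ p + |y| ^ p)) * |x - y| ^ p :=
        mul_le_mul_of_nonneg_right keyR (Real.rpow_nonneg (abs_nonneg _) _)
    _ = _ := by ring
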